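/- Let G be a countable abelian group acting ergodically by measure-preserving transformations on a probability space (X,μ), and let A, B be measurable subsets with positive measure. Then there exists a G-invariant measurable μ-conull set X₁ ⊆ X such that for all x ∈ X₁, the set of transfer times R_{A,B} = {g ∈ G : μ(A ∩ g⁻¹B) > 0} equals B_x - A_x = {b - a : b ∈ B_x, a ∈ A_x}, where A_x = {g : gx ∈ A} and B_x = {g : gx ∈ B}. -/

import Mathlib

open scoped Pointwise

open MeasureTheory

theorem stmt9 {G X : Type*} [AddCommGroup G] [Countable G]
    [MeasurableSpace X] (μ : Measure X) [IsProbabilityMeasure μ]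
    (T : G → X → X)
    (hT0 : ∀ x, T 0 x = x)
    (hTadd : ∀ g h x, T (g + h) x = T g (T h x))
    (hTmp : ∀ g, MeasurePreserving (T g) μ μ)
    (herg : ∀ S : Set X, MeasurableSet S → (∀ g, T g ⁻¹' S = S) → μ S = 0 ∨ μ S = 1)
    (A B : Set X) (hA : MeasurableSet A) (hB : MeasurableSet B)
    (hApos : 0 < μ A) (hBpos : 0 < μ B) :
    ∃ X₁ : Set X, MeasurableSet X₁ ∧ μ X₁ᶜ = 0 ∧
      (∀ g : G, T g ⁻¹' X₁ = X₁) ∧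
      ∀ x ∈ X₁,
        {g : G | 0 < μ (A ∩ T g ⁻¹' B)}
          = {g : G | T g x ∈ B} - {g : G | T g x ∈ A} := by
  classical
  set S : G → Set X := fun g => A ∩ T g ⁻¹' B with hSdef
  have hSmeas : ∀ g, MeasurableSet (S g) := fun g =>
    hA.inter ((hTmp g).measurable hB)
  set U : G → Set X := fun g => ⋃ a : G, T a ⁻¹' S g with hUdef
  have hUmeas : ∀ g, MeasurableSet (U g) := fun g =>
    MeasurableSet.iUnion fun a => (hTmp a).measurable (hSmeas g)
  have hUinv : ∀ g h, T h ⁻¹' U g = U g := by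
    intro g h
    ext x
    simp only [hUdef, Set.mem_iUnion, Set.mem_preimage]
    constructor
    · rintro ⟨a, ha⟩
      exact ⟨a + h, by rwa [hTadd]⟩
    · rintro ⟨a, ha⟩
      refine ⟨a - h, ?_⟩
      have : T (a - h + h) x ∈ S g := by rwa [sub_add_cancel]
      rwa [hTadd] at this
  have hSsubU : ∀ g, S g ⊆ U g := by
    intro g x hx
    exact Set.mem_iUnion.2 ⟨0, by simpa [hT0] using hx⟩
  -- measure of U g
  have hUmeasure : ∀ g, (0 < μ (S g) → μ (U g) = 1) ∧ (¬ 0 < μ (S g) → μ (U g) = 0) := by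
    intro g
    constructor
    · intro hpos
      rcases herg (U g) (hUmeas g) (fun h => hUinv g h) with h0 | h1
      · exact absurd h0 (by
          have := lt_of_lt_of_le hpos (measure_mono (hSsubU g))
          exact ne_of_gt this)
      · exact h1
    · intro hnpos
      have h0 : μ (S g) = 0 := by
        by_contra h
        exact hnpos (lt_of_le_of_ne (zero_le') (Ne.symm h))
      refine measure_iUnion_null fun a => ?_
      rw [(hTmp a).measure_preimage (hSmeas g).nullMeasurableSet]
      exact h0
  set X₁ : Set X := ⋂ g : G, if 0 < μ (S g) then U g else (U g)ᶜ with hX₁def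
  have hVmeas : ∀ g : G, MeasurableSet (if 0 < μ (S g) then U g else (U g)ᶜ) := by
    intro g
    split
    · exact hUmeas g
    · exact (hUmeas g).compl
  refine ⟨X₁, MeasurableSet.iInter hVmeas, ?_, ?_, ?_⟩
  · rw [hX₁def, Set.compl_iInter]
    refine measure_iUnion_null fun g => ?_
    by_cases hg : 0 < μ (S g)
    · simp only [hg, if_pos]
      have h1 := (hUmeasure g).1 hg
      rw [measure_compl (hUmeas g) (measure_ne_top μ _), h1, measure_univ, tsub_self]
    · simp only [hg, if_neg, not_false_iff, compl_compl]
      exact (hUmeasure g).2 hg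
  · intro h
    rw [hX₁def, Set.preimage_iInter]
    refine Set.iInter_congr fun g => ?_
    by_cases hg : 0 < μ (S g)
    · simp only [hg, if_pos]
      exact hUinv g h
    · simp only [hg, if_neg, not_false_iff, Set.preimage_compl, hUinv g h]
  · intro x hx
    have hx' : ∀ g : G, (0 < μ (S g) → x ∈ U g) ∧ (¬ 0 < μ (S g) → x ∉ U g) := by
      intro g
      have := Set.mem_iInter.1 hx g
      by_cases hg : 0 < μ (S g)
      · rw [if_pos hg] at this
        exact ⟨fun _ => this, fun h => absurd hg h⟩
      · rw [if_neg hg] at this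
        exact ⟨fun h => absurd h hg, fun _ => this⟩
    ext g
    simp only [Set.mem_setOf_eq, Set.mem_sub]
    have hmemU : x ∈ U g ↔ ∃ a : G, T a x ∈ A ∧ T (g + a) x ∈ B := by
      simp only [hUdef, Set.mem_iUnion, Set.mem_preimage, hSdef, Set.mem_inter_iff]
      constructor
      · rintro ⟨a, ha, hb⟩
        exact ⟨a, ha, by rwa [hTadd]⟩
      · rintro ⟨a, ha, hb⟩
        exact ⟨a, ha, by rw [← hTadd]; exact hb⟩
    constructor
    · intro hpos
      have hxU := (hx' g).1 hpos
      rcases hmemU.1 hxU with ⟨a, haA, hbB⟩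
      exact ⟨g + a, hbB, a, haA, by abel⟩
    · rintro ⟨b, hbB, a, haA, rfl⟩
      by_contra hnpos
      have hxnU := (hx' (b - a)).2 hnpos
      exact hxnU (hmemU.2 ⟨a, haA, by rwa [sub_add_cancel]⟩)
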